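/- Let G = (V,E) be a finite connected simple graph, let v, w ∈ V with δ(v,w) ≥ 2, and let ℓ(x) = min(δ(x,v), δ(x,w)) for x ∈ V. Let pred : V → V be a partial map (the predecessor map) satisfying: pred is undefined at v and at w; and whenever pred(b) = a, the vertices a and b are adjacent in G and ℓ(b) = ℓ(a) + 1. Call an edge {a,b} of G indispensable if pred(b) = a or pred(a) = b. Call a vertex x v-interesting if for every vertex z ≠ v with δ(v,z) + δ(z,x) = δ(v,x), every edge of G incident to z is indispensable (and define w-interesting symmetrically with w in place of v). Then for every integer k ≥ 1: every v-interesting vertex x with δ(v,x) = k satisfies δ(w,x) ≥ k + 2, and every w-interesting vertex x with δ(w,x) = k satisfies δ(v,x) ≥ k + 2; in particular, every such vertex x satisfies |δ(x,v) − δ(x,w)| ≥ 2, i.e., x distinguishes v and w. -/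

import Mathlib

/-- On any shortest walk to `x`, there is a penultimate vertex. -/
lemma exists_penultimate {V : Type*} (G : SimpleGraph V) (hconn : G.Connected)
    {u x : V} (h : 0 < G.dist u x) :
    ∃ y : V, G.Adj y x ∧ G.dist u y + 1 = G.dist u x := by
  obtain ⟨p, hp⟩ := hconn.exists_walk_length_eq_dist u x
  have hr : p.reverse.length = G.dist u x := by rw [SimpleGraph.Walk.length_reverse]; exact hp
  cases hq : p.reverse with
  | nil => rw [hq] at hr; simp only [SimpleGraph.Walk.length_nil] at hr; omega
  | cons hadj q =>
    rename_i c
    rw [hq] at hr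
    simp [SimpleGraph.Walk.length_cons] at hr
    refine ⟨c, hadj.symm, ?_⟩
    have h1 : G.dist c u ≤ q.length := SimpleGraph.dist_le q
    have h2 : G.dist u c = G.dist c u := SimpleGraph.dist_comm ..
    have h3 : G.dist c x = 1 := SimpleGraph.dist_eq_one_iff_adj.mpr hadj.symm
    have h4 : G.dist u x ≤ G.dist u c + G.dist c x := hconn.dist_triangle
    omega

/-- Main auxiliary lemma: induction on the distance from `v`. -/
lemma aux_interesting {V : Type*} (G : SimpleGraph V) (hconn : G.Connected)
    (v w : V) (hvw : 2 ≤ G.dist v w)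
    (pred : V → Option V) (hpredv : pred v = none)
    (hpred : ∀ a b : V, pred b = some a →
      G.Adj a b ∧
        min (G.dist b v) (G.dist b w) = min (G.dist a v) (G.dist a w) + 1)
    (k : ℕ) :
    ∀ x : V, (∀ z : V, z ≠ v → G.dist v z + G.dist z x = G.dist v x →
        ∀ y : V, G.Adj z y → (pred y = some z ∨ pred z = some y)) →
      G.dist v x = k →
      min (G.dist x v) (G.dist x w) = k ∧ k + 2 ≤ G.dist w x ∧
        ∀ y : V, pred x = some y → G.dist v y + 1 = k := by
  induction k with
  | zero =>
    intro x hint hdx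
    have hx : x = v := ((hconn.dist_eq_zero_iff).mp hdx).symm
    subst hx
    refine ⟨by simp [SimpleGraph.dist_self], by rw [SimpleGraph.dist_comm]; omega, ?_⟩
    intro y hy; rw [hpredv] at hy; exact absurd hy (by simp)
  | succ k ih =>
    intro x hint hdx
    have hxv : x ≠ v := by
      intro h; subst h; rw [SimpleGraph.dist_self] at hdx; omega
    obtain ⟨x₀, hadj, hx₀⟩ := exists_penultimate G hconn (u := v) (x := x) (by omega)
    have hdx₀ : G.dist v x₀ = k := by omega
    -- x₀ is interesting
    have hint₀ : ∀ z : V, z ≠ v → G.dist v z + G.dist z x₀ = G.dist v x₀ →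
        ∀ y : V, G.Adj z y → (pred y = some z ∨ pred z = some y) := by
      intro z hz hgz
      apply hint z hz
      have h1 : G.dist x₀ x = 1 := SimpleGraph.dist_eq_one_iff_adj.mpr hadj
      have h2 : G.dist z x ≤ G.dist z x₀ + G.dist x₀ x := hconn.dist_triangle
      have h3 : G.dist v x ≤ G.dist v z + G.dist z x := hconn.dist_triangle
      omega
    obtain ⟨hmin₀, hw₀, hpred₀⟩ := ih x₀ hint₀ hdx₀
    -- every edge at x is indispensable
    have hself : ∀ y : V, G.Adj x y → pred y = some x ∨ pred x = some y :=
      hint x hxv (by simp [SimpleGraph.dist_self])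
    have hpx : pred x = some x₀ := by
      rcases hself x₀ hadj.symm with h | h
      · exact absurd (hpred₀ x h) (by omega)
      · exact h
    have hminx : min (G.dist x v) (G.dist x w) = k + 1 := by
      rw [(hpred x₀ x hpx).2, hmin₀]
    refine ⟨hminx, ?_, ?_⟩
    · by_contra hlt
      push_neg at hlt
      have hge : k + 1 ≤ G.dist x w := hminx ▸ min_le_right _ _
      have hc1 : G.dist w x = G.dist x w := SimpleGraph.dist_comm ..
      obtain ⟨y, hadjy, hy⟩ := exists_penultimate G hconn (u := w) (x := x) (by omega)
      rcases hself y hadjy.symm with h | h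
      · have hm := (hpred x y h).2
        have h5 : min (G.dist y v) (G.dist y w) ≤ G.dist y w := min_le_right _ _
        rw [hm, hminx] at h5
        have h6 : G.dist y w = G.dist w y := SimpleGraph.dist_comm ..
        omega
      · rw [hpx] at h
        have : x₀ = y := by injection h
        subst this
        omega
    · intro y hy
      rw [hpx] at hy
      have : x₀ = y := by injection hy
      subst this
      omega

/-- Interesting vertices distinguish `v` and `w` (Lemma 3.4 / `interesting-distinguish`). -/
theorem stmt_0 {V : Type*} [Fintype V] (G : SimpleGraph V) (hconn : G.Connected)
    (v w : V) (hvw : 2 ≤ G.dist v w)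
    (pred : V → Option V)
    (hpredv : pred v = none) (hpredw : pred w = none)
    (hpred : ∀ a b : V, pred b = some a →
      G.Adj a b ∧
        min (G.dist b v) (G.dist b w) = min (G.dist a v) (G.dist a w) + 1)
    (k : ℕ) (hk : 1 ≤ k) (x : V) :
    ((∀ z : V, z ≠ v → G.dist v z + G.dist z x = G.dist v x →
        ∀ y : V, G.Adj z y → (pred y = some z ∨ pred z = some y)) →
      G.dist v x = k →
      k + 2 ≤ G.dist w x ∧ 2 ≤ |(G.dist x v : ℤ) - (G.dist x w : ℤ)|) ∧
    ((∀ z : V, z ≠ w → G.dist w z + G.dist z x = G.dist w x →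
        ∀ y : V, G.Adj z y → (pred y = some z ∨ pred z = some y)) →
      G.dist w x = k →
      k + 2 ≤ G.dist v x ∧ 2 ≤ |(G.dist x v : ℤ) - (G.dist x w : ℤ)|) := by
  constructor
  · intro hint hd
    obtain ⟨hmin, hw, -⟩ := aux_interesting G hconn v w hvw pred hpredv hpred k x hint hd
    refine ⟨hw, ?_⟩
    have e1 : G.dist x v = k := by rw [SimpleGraph.dist_comm]; exact hd
    have e2 : k + 2 ≤ G.dist x w := by rw [SimpleGraph.dist_comm]; exact hw
    refine le_abs.mpr (Or.inr ?_)
    push_cast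
    omega
  · intro hint hd
    have hvw' : 2 ≤ G.dist w v := by rw [SimpleGraph.dist_comm]; exact hvw
    have hpred' : ∀ a b : V, pred b = some a →
        G.Adj a b ∧
          min (G.dist b w) (G.dist b v) = min (G.dist a w) (G.dist a v) + 1 := by
      intro a b hab
      obtain ⟨h1, h2⟩ := hpred a b hab
      exact ⟨h1, by rw [min_comm (G.dist b w), min_comm (G.dist a w)]; exact h2⟩
    obtain ⟨hmin, hw, -⟩ := aux_interesting G hconn w v hvw' pred hpredw hpred' k x hint hd
    refine ⟨hw, ?_⟩
    have e1 : G.dist x w = k := by rw [SimpleGraph.dist_comm]; exact hd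
    have e2 : k + 2 ≤ G.dist x v := by rw [SimpleGraph.dist_comm]; exact hw
    refine le_abs.mpr (Or.inl ?_)
    push_cast
    omega
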